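/- Let u, v ∈ ℝ³ be linearly independent vectors (two distinct projective points) and let l, m ∈ ℝ³ be linearly independent vectors (two distinct projective lines) such that ⟪u, l⟫ ≠ 0, ⟪u, m⟫ ≠ 0, ⟪v, l⟫ ≠ 0 and ⟪v, m⟫ ≠ 0 (neither point lies on either line). Then there exists A ∈ GL(3, ℝ) that is not a scalar multiple of the identity matrix such that A u is a scalar multiple of u, A v is a scalar multiple of v, Aᵀ l is a scalar multiple of l, and Aᵀ m is a scalar multiple of m. That is, requiring two points and two lines to be fixed still leaves a nontrivial projectivity, so two points and two lines never comprise a complete projective pinning system. -/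

import Mathlib

open Matrix

lemma vecMulVec_mulVec' (w z x : Fin 3 → ℝ) :
    (vecMulVec w z).mulVec x = (z ⬝ᵥ x) • w := by
  funext i
  simp [vecMulVec, mulVec, dotProduct, Fin.sum_univ_three]
  ring

lemma vecMulVec_transpose' (w z : Fin 3 → ℝ) :
    (vecMulVec w z)ᵀ = vecMulVec z w := by
  ext i j
  simp [vecMulVec, mul_comm]

lemma det_one_add_smul_vecMulVec (t : ℝ) (w z : Fin 3 → ℝ) :
    (1 + t • vecMulVec w z).det = 1 + t * (z ⬝ᵥ w) := by
  simp [Matrix.det_fin_three, vecMulVec, Matrix.add_apply, Matrix.smul_apply,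
    Matrix.one_apply, dotProduct, Fin.sum_univ_three]
  ring

/-- given two distinct projective points and two distinct projective
lines, neither point on either line, there is a projectivity which is not the
identity (not a scalar multiple of the identity matrix) fixing both points and
both lines: two points and two lines never form a complete projective pinning
system. -/
theorem two_points_two_lines_not_pinning
    (u v : Fin 3 → ℝ) (huv : LinearIndependent ℝ ![u, v])
    (l m : Fin 3 → ℝ) (hlm : LinearIndependent ℝ ![l, m])
    (hul : u ⬝ᵥ l ≠ 0) (hum : u ⬝ᵥ m ≠ 0)
    (hvl : v ⬝ᵥ l ≠ 0) (hvm : v ⬝ᵥ m ≠ 0) :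
    ∃ A : Matrix (Fin 3) (Fin 3) ℝ, IsUnit A.det ∧
      (¬∃ k : ℝ, A = k • (1 : Matrix (Fin 3) (Fin 3) ℝ)) ∧
      (∃ c : ℝ, A.mulVec u = c • u) ∧
      (∃ c : ℝ, A.mulVec v = c • v) ∧
      (∃ c : ℝ, Aᵀ.mulVec l = c • l) ∧
      (∃ c : ℝ, Aᵀ.mulVec m = c • m) := by
  set z := u ⨯₃ v with hz
  set w := l ⨯₃ m with hw
  have hzne : z ≠ 0 := crossProduct_ne_zero_iff_linearIndependent.2 huv
  have hwne : w ≠ 0 := crossProduct_ne_zero_iff_linearIndependent.2 hlm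
  set s : ℝ := z ⬝ᵥ w with hs
  set t : ℝ := if s = 0 then 1 else s⁻¹ with ht
  have htne : t ≠ 0 := by
    by_cases h : s = 0 <;> simp [ht, h]
  have hdet : (1 + t • vecMulVec w z).det ≠ 0 := by
    rw [det_one_add_smul_vecMulVec]
    by_cases h : s = 0
    · simp [ht, h, ← hs]
    · rw [ht, if_neg h, ← hs, inv_mul_cancel₀ h]; norm_num
  refine ⟨1 + t • vecMulVec w z, isUnit_iff_ne_zero.2 hdet, ?_, ?_, ?_, ?_, ?_⟩
  · rintro ⟨k, hk⟩
    have hune : u ≠ 0 := by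
      intro h
      exact (huv.ne_zero 0) (by simpa using h)
    have hzu : z ⬝ᵥ u = 0 := by
      rw [hz, dotProduct_comm]; exact dot_self_cross u v
    have hAu : (1 + t • vecMulVec w z).mulVec u = u := by
      rw [add_mulVec, one_mulVec, smul_mulVec, vecMulVec_mulVec', hzu]
      simp
    have hk1 : k = 1 := by
      have := hAu
      rw [hk] at this
      -- (k • 1).mulVec u = u
      rw [smul_mulVec, one_mulVec] at this
      rcases Function.ne_iff.1 hune with ⟨i, hi⟩
      have hki := congrFun this i
      simp only [Pi.smul_apply, smul_eq_mul] at hki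
      have : k * u i = 1 * u i := by rw [hki, one_mul]
      exact mul_right_cancel₀ hi this
    rw [hk1, one_smul] at hk
    have h0 : t • vecMulVec w z = 0 := by
      have := hk
      rwa [add_eq_left] at this
    have h1 : vecMulVec w z = 0 := by
      rcases smul_eq_zero.1 h0 with h | h
      · exact absurd h htne
      · exact h
    rcases Function.ne_iff.1 hwne with ⟨i, hwi⟩
    rcases Function.ne_iff.1 hzne with ⟨j, hzj⟩
    have := congrFun (congrFun h1 i) j
    simp [vecMulVec] at this
    rcases this with h | h
    · exact hwi h
    · exact hzj h
  · refine ⟨1, ?_⟩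
    have hzu : z ⬝ᵥ u = 0 := by rw [hz, dotProduct_comm]; exact dot_self_cross u v
    rw [add_mulVec, one_mulVec, smul_mulVec, vecMulVec_mulVec', hzu]
    simp
  · refine ⟨1, ?_⟩
    have hzv : z ⬝ᵥ v = 0 := by rw [hz, dotProduct_comm]; exact dot_cross_self u v
    rw [add_mulVec, one_mulVec, smul_mulVec, vecMulVec_mulVec', hzv]
    simp
  · refine ⟨1, ?_⟩
    have hwl : w ⬝ᵥ l = 0 := by rw [hw, dotProduct_comm]; exact dot_self_cross l m
    rw [transpose_add, transpose_one, transpose_smul, vecMulVec_transpose',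
      add_mulVec, one_mulVec, smul_mulVec, vecMulVec_mulVec', hwl]
    simp
  · refine ⟨1, ?_⟩
    have hwm : w ⬝ᵥ m = 0 := by rw [hw, dotProduct_comm]; exact dot_cross_self l m
    rw [transpose_add, transpose_one, transpose_smul, vecMulVec_transpose',
      add_mulVec, one_mulVec, smul_mulVec, vecMulVec_mulVec', hwm]
    simp
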